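/- Let k, n, j be positive integers. The number of k-ary paths of order (k+1)n with exactly j peaks equals (1/j)·binomial(n−1, j−1)·binomial(kn, j−1); equivalently, j times the number of k-ary paths of order (k+1)n with exactly j peaks equals binomial(n−1, j−1)·binomial(kn, j−1). -/

import Mathlib

/-- A `k`-ary path of order `(k+1)n`: a word over `{U, D}` (here `true` = `U`, with
displacement `(1,k)`, and `false` = `D`, with displacement `(1,−1)`) with exactly `n`
letters `U` and `kn` letters `D`, such that every partial sum has nonnegative
`y`-coordinate (the path then automatically ends at `((k+1)n, 0)`). -/
def IsKaryPath (k n : ℕ) (w : List Bool) : Prop :=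
  w.count true = n ∧ w.count false = k * n ∧
    ∀ p : List Bool, p <+: w → (p.count false : ℤ) ≤ (k : ℤ) * p.count true

/-- There is a peak (the factor `UD`) starting at position `i` of `w`. -/
def IsPeakAt (w : List Bool) (i : ℕ) : Prop :=
  [true, false] <+: w.drop i

/-- The number of peaks of a word `w`. -/
noncomputable def numPeaks (w : List Bool) : ℕ :=
  {i : ℕ | IsPeakAt w i}.ncard

namespace S16
open List

lemma isPeakAt_lt {w : List Bool} {i : ℕ} (h : IsPeakAt w i) : i < w.length := by
  have h2 := h.length_le
  simp at h2
  omega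

lemma peakSet_finite (w : List Bool) : {i | IsPeakAt w i}.Finite :=
  (Set.finite_lt_nat w.length).subset fun _ hi => isPeakAt_lt hi

lemma numPeaks_nil : numPeaks [] = 0 := by
  unfold numPeaks
  convert Set.ncard_empty ℕ using 2
  ext i
  simp only [Set.mem_setOf_eq, Set.mem_empty_iff_false, iff_false]
  intro h
  simpa using h.length_le

lemma isPeakAt_cons_succ (x : Bool) (w : List Bool) (i : ℕ) :
    IsPeakAt (x :: w) (i+1) ↔ IsPeakAt w i := Iff.rfl

lemma isPeakAt_cons_zero (x : Bool) (w : List Bool) :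
    IsPeakAt (x :: w) 0 ↔ (x = true ∧ w.head? = some false) := by
  cases w with
  | nil =>
    simp only [IsPeakAt, List.drop_zero]
    constructor
    · intro h; have := h.length_le; simp at this
    · rintro ⟨-, h⟩; simp at h
  | cons y t =>
    simp only [IsPeakAt, List.drop_zero, List.cons_prefix_cons, List.head?_cons,
      Option.some_inj]
    constructor
    · rintro ⟨h1, h2, -⟩; exact ⟨h1.symm, h2.symm⟩
    · rintro ⟨h1, h2⟩; exact ⟨h1.symm, h2.symm, List.nil_prefix⟩

lemma numPeaks_cons (x : Bool) (w : List Bool) :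
    numPeaks (x :: w) =
      numPeaks w + (if x = true ∧ w.head? = some false then 1 else 0) := by
  classical
  have hset : {i | IsPeakAt (x :: w) i} =
      (if x = true ∧ w.head? = some false then {0} else ∅) ∪
        (Nat.succ '' {i | IsPeakAt w i}) := by
    ext i
    cases i with
    | zero =>
      simp only [Set.mem_setOf_eq, isPeakAt_cons_zero, Set.mem_union, Set.mem_image]
      constructor
      · intro h; left; simp [h]
      · rintro (h | ⟨i, -, h⟩)
        · split at h <;> simp_all
        · exact absurd h (by simp)
    | succ i =>
      simp only [Set.mem_setOf_eq, isPeakAt_cons_succ, Set.mem_union, Set.mem_image]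
      constructor
      · intro h; exact Or.inr ⟨i, h, rfl⟩
      · rintro (h | ⟨i', h, hi⟩)
        · split at h <;> simp_all
        · have : i' = i := by omega
          subst this; exact h
  have himg : (Nat.succ '' {i | IsPeakAt w i}).ncard = numPeaks w :=
    Set.ncard_image_of_injective _ Nat.succ_injective
  unfold numPeaks
  rw [hset]
  split
  · rw [Set.singleton_union, Set.ncard_insert_of_notMem (by simp)
      ((peakSet_finite w).image _), himg, numPeaks]
  · rw [Set.empty_union, himg, numPeaks]
    omega

/-! ### words from blocks -/

def blockW (p : ℕ × ℕ) : List Bool := List.replicate p.1 true ++ List.replicate p.2 false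

def wordOf (l : List (ℕ × ℕ)) : List Bool := l.flatMap blockW

@[simp] lemma wordOf_nil : wordOf [] = [] := rfl

@[simp] lemma wordOf_cons (p : ℕ × ℕ) (l : List (ℕ × ℕ)) :
    wordOf (p :: l) = List.replicate p.1 true ++ List.replicate p.2 false ++ wordOf l := by
  simp [wordOf, blockW, List.flatMap_cons]

lemma wordOf_append (l₁ l₂ : List (ℕ × ℕ)) :
    wordOf (l₁ ++ l₂) = wordOf l₁ ++ wordOf l₂ := by
  simp [wordOf]

lemma count_true_wordOf (l : List (ℕ × ℕ)) :
    (wordOf l).count true = (l.map Prod.fst).sum := by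
  induction l with
  | nil => rfl
  | cons p l ih => simp [List.count_append, ih, List.count_replicate]

lemma count_false_wordOf (l : List (ℕ × ℕ)) :
    (wordOf l).count false = (l.map Prod.snd).sum := by
  induction l with
  | nil => rfl
  | cons p l ih => simp [List.count_append, ih, List.count_replicate]

lemma length_wordOf (l : List (ℕ × ℕ)) :
    (wordOf l).length = (l.map Prod.fst).sum + (l.map Prod.snd).sum := by
  induction l with
  | nil => rfl
  | cons p l ih => simp [ih]; ring

lemma numPeaks_replicate_false_append (b : ℕ) (w : List Bool) :
    numPeaks (List.replicate b false ++ w) = numPeaks w := by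
  induction b with
  | zero => simp
  | succ b ih =>
    rw [List.replicate_succ, List.cons_append, numPeaks_cons, ih]
    simp

lemma head?_replicate_append {α} (a : α) (b : ℕ) (hb : 1 ≤ b) (w : List α) :
    (List.replicate b a ++ w).head? = some a := by
  cases b with
  | zero => omega
  | succ b => rw [List.replicate_succ]; rfl

lemma numPeaks_block (a b : ℕ) (ha : 1 ≤ a) (hb : 1 ≤ b) (rest : List Bool)
    (hrest : rest.head? ≠ some false) :
    numPeaks (List.replicate a true ++ (List.replicate b false ++ rest)) =
      numPeaks rest + 1 := by
  induction a with
  | zero => omega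
  | succ a ih =>
    rw [List.replicate_succ, List.cons_append, numPeaks_cons]
    cases a with
    | zero =>
      simp only [List.replicate_zero, List.nil_append]
      rw [numPeaks_replicate_false_append, head?_replicate_append false b hb]
      simp
    | succ a =>
      rw [ih (by omega)]
      rw [head?_replicate_append true (a+1) (by omega)]
      simp

lemma head?_wordOf_ne_false (l : List (ℕ × ℕ)) (hl : ∀ p ∈ l, 1 ≤ p.1) :
    (wordOf l).head? ≠ some false := by
  cases l with
  | nil => simp
  | cons p l =>
    rw [wordOf_cons, List.append_assoc,
      head?_replicate_append true p.1 (hl p (by simp)) _]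
    simp

lemma numPeaks_wordOf (l : List (ℕ × ℕ)) (hl : ∀ p ∈ l, 1 ≤ p.1 ∧ 1 ≤ p.2) :
    numPeaks (wordOf l) = l.length := by
  induction l with
  | nil => simp [numPeaks_nil]
  | cons p l ih =>
    rw [wordOf_cons, List.append_assoc,
      numPeaks_block p.1 p.2 (hl p (by simp)).1 (hl p (by simp)).2 _
        (head?_wordOf_ne_false l (fun q hq => (hl q (by simp [hq])).1)),
      ih (fun q hq => hl q (by simp [hq]))]
    simp

/-! ### decomposition into blocks -/

def consT : List (ℕ × ℕ) → List (ℕ × ℕ)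
  | [] => [(1, 0)]
  | (a, b) :: l => (a + 1, b) :: l

def consF : List (ℕ × ℕ) → List (ℕ × ℕ)
  | (0, b) :: l => (0, b + 1) :: l
  | l => (0, 1) :: l

def decomp : List Bool → List (ℕ × ℕ)
  | [] => []
  | true :: w => consT (decomp w)
  | false :: w => consF (decomp w)

@[simp] lemma consF_nil : consF [] = [(0, 1)] := rfl
@[simp] lemma consF_zero (b : ℕ) (l : List (ℕ × ℕ)) :
    consF ((0, b) :: l) = (0, b + 1) :: l := rfl
@[simp] lemma consF_pos (a b : ℕ) (l : List (ℕ × ℕ)) :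
    consF ((a + 1, b) :: l) = (0, 1) :: (a + 1, b) :: l := rfl

lemma wordOf_consT (l : List (ℕ × ℕ)) : wordOf (consT l) = true :: wordOf l := by
  match l with
  | [] => rfl
  | (a, b) :: l => simp [consT, List.replicate_succ]

lemma wordOf_consF (l : List (ℕ × ℕ)) : wordOf (consF l) = false :: wordOf l := by
  match l with
  | [] => rfl
  | (0, b) :: l => simp [List.replicate_succ]
  | (a+1, b) :: l => simp [List.replicate_succ]

lemma wordOf_decomp (w : List Bool) : wordOf (decomp w) = w := by
  induction w with
  | nil => rfl
  | cons x w ih =>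
    cases x
    · rw [show decomp (false :: w) = consF (decomp w) from rfl, wordOf_consF, ih]
    · rw [show decomp (true :: w) = consT (decomp w) from rfl, wordOf_consT, ih]

lemma decomp_ne_nil {w : List Bool} (hw : w ≠ []) : decomp w ≠ [] := by
  intro h
  apply hw
  rw [← wordOf_decomp w, h, wordOf_nil]

lemma consT_ne_nil (l : List (ℕ × ℕ)) : consT l ≠ [] := by
  match l with
  | [] => simp [consT]
  | (a, b) :: l => simp [consT]

lemma consF_ne_nil (l : List (ℕ × ℕ)) : consF l ≠ [] := by
  match l with
  | [] => simp
  | (0, b) :: l => simp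
  | (a+1, b) :: l => simp

lemma tail_fst_pos_consT (l : List (ℕ × ℕ)) (hl : ∀ p ∈ l.tail, 1 ≤ p.1) :
    ∀ p ∈ (consT l).tail, 1 ≤ p.1 := by
  match l with
  | [] => simp [consT]
  | (a, b) :: l => simpa [consT] using hl

lemma tail_fst_pos_consF (l : List (ℕ × ℕ)) (hl : ∀ p ∈ l.tail, 1 ≤ p.1)
    (hh : ∀ a b l', l = (a, b) :: l' → a = 0 ∨ 1 ≤ a) :
    ∀ p ∈ (consF l).tail, 1 ≤ p.1 := by
  match l with
  | [] => simp
  | (0, b) :: l => simpa using hl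
  | (a+1, b) :: l =>
    intro p hp
    simp only [consF_pos, List.tail_cons, List.mem_cons] at hp
    rcases hp with rfl | hp
    · simp
    · exact hl p hp

lemma tail_fst_pos_decomp (w : List Bool) : ∀ p ∈ (decomp w).tail, 1 ≤ p.1 := by
  induction w with
  | nil => simp [decomp]
  | cons x w ih =>
    cases x
    · exact tail_fst_pos_consF (decomp w) ih (fun _ _ _ _ => by omega)
    · exact tail_fst_pos_consT (decomp w) ih

lemma head_fst_pos_decomp (w : List Bool) (hw : w.head? = some true) :
    ∀ a b l, decomp w = (a, b) :: l → 1 ≤ a := by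
  cases w with
  | nil => simp at hw
  | cons x w =>
    have hx : x = true := by simpa using hw
    subst hx
    intro a b l h
    rw [show decomp (true :: w) = consT (decomp w) from rfl] at h
    match hd : decomp w with
    | [] => rw [hd] at h; simp [consT] at h; omega
    | (a', b') :: l' => rw [hd] at h; simp [consT] at h; omega

lemma fst_pos_decomp (w : List Bool) (hw : w.head? = some true) :
    ∀ p ∈ decomp w, 1 ≤ p.1 := by
  intro p hp
  match hd : decomp w with
  | [] => rw [hd] at hp; simp at hp
  | (a, b) :: l =>
    rw [hd] at hp
    rcases List.mem_cons.1 hp with rfl | hp'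
    · exact head_fst_pos_decomp w hw a b l hd
    · have := tail_fst_pos_decomp w
      rw [hd] at this
      exact this p hp'

lemma dropLast_snd_pos_consT (l : List (ℕ × ℕ)) (hl : ∀ p ∈ l.dropLast, 1 ≤ p.2) :
    ∀ p ∈ (consT l).dropLast, 1 ≤ p.2 := by
  match l with
  | [] => simp [consT]
  | [(a, b)] => simp [consT]
  | (a, b) :: q :: l =>
    intro p hp
    simp only [consT, List.dropLast_cons₂, List.mem_cons] at hp
    rcases hp with rfl | hp
    · exact hl (a, b) (by simp)
    · exact hl p (by simp [hp])

lemma dropLast_snd_pos_consF (l : List (ℕ × ℕ)) (hl : ∀ p ∈ l.dropLast, 1 ≤ p.2) :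
    ∀ p ∈ (consF l).dropLast, 1 ≤ p.2 := by
  match l with
  | [] => simp
  | [(0, b)] => simp
  | (0, b) :: q :: l =>
    intro p hp
    simp only [consF_zero, List.dropLast_cons₂, List.mem_cons] at hp
    rcases hp with rfl | hp
    · simp
    · exact hl p (by simp [hp])
  | (a+1, b) :: l =>
    intro p hp
    rw [consF_pos, List.dropLast_cons₂, List.mem_cons] at hp
    rcases hp with rfl | hp
    · simp
    · exact hl p hp

lemma dropLast_snd_pos_decomp (w : List Bool) : ∀ p ∈ (decomp w).dropLast, 1 ≤ p.2 := by
  induction w with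
  | nil => simp [decomp]
  | cons x w ih =>
    cases x
    · exact dropLast_snd_pos_consF (decomp w) ih
    · exact dropLast_snd_pos_consT (decomp w) ih

lemma getLast?_consT (l : List (ℕ × ℕ)) (hne : l ≠ []) :
    ∀ p, (consT l).getLast? = some p →
      1 ≤ p.2 ∨ ∃ q, l.getLast? = some q ∧ p.2 = q.2 := by
  match l with
  | [(a, b)] => intro p hp; simp [consT] at hp; right; exact ⟨(a, b), by simp, by simp [← hp]⟩
  | (a, b) :: q :: l =>
    intro p hp
    rw [consT, List.getLast?_cons_cons] at hp
    right
    exact ⟨p, by rw [List.getLast?_cons_cons]; exact hp, rfl⟩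

lemma getLast?_consF (l : List (ℕ × ℕ)) :
    ∀ p, (consF l).getLast? = some p →
      1 ≤ p.2 ∨ ∃ q, l.getLast? = some q ∧ p.2 = q.2 := by
  match l with
  | [] => intro p hp; simp at hp; left; simp [← hp]
  | [(0, b)] => intro p hp; simp at hp; left; simp [← hp]
  | (0, b) :: q :: l =>
    intro p hp
    rw [consF_zero, List.getLast?_cons_cons] at hp
    right
    exact ⟨p, by rw [List.getLast?_cons_cons]; exact hp, rfl⟩
  | (a+1, b) :: l =>
    intro p hp
    rw [consF_pos, List.getLast?_cons_cons] at hp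
    right
    exact ⟨p, hp, rfl⟩

lemma getLast_snd_pos_decomp (w : List Bool) (hw : w.getLast? = some false) :
    ∀ p, (decomp w).getLast? = some p → 1 ≤ p.2 := by
  induction w with
  | nil => simp at hw
  | cons x w ih =>
    cases w with
    | nil =>
      simp only [List.getLast?_singleton, Option.some_inj] at hw
      subst hw
      intro p hp
      simp [decomp] at hp
      simp [← hp]
    | cons y t =>
      rw [List.getLast?_cons_cons] at hw
      have ihs := ih hw
      have hne : decomp (y :: t) ≠ [] := decomp_ne_nil (by simp)
      intro p hp
      cases x
      · rcases getLast?_consF (decomp (y :: t)) p hp with h | ⟨q, hq, hpq⟩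
        · exact h
        · rw [hpq]; exact ihs q hq
      · rcases getLast?_consT (decomp (y :: t)) hne p hp with h | ⟨q, hq, hpq⟩
        · exact h
        · rw [hpq]; exact ihs q hq

lemma goodBlocks_decomp (w : List Bool) (h1 : w.head? = some true)
    (h2 : w.getLast? = some false) : ∀ p ∈ decomp w, 1 ≤ p.1 ∧ 1 ≤ p.2 := by
  intro p hp
  refine ⟨fst_pos_decomp w h1 p hp, ?_⟩
  have hne : decomp w ≠ [] := by
    intro h; rw [h] at hp; simp at hp
  have hsplit := List.dropLast_append_getLast hne
  rw [← hsplit, List.mem_append] at hp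
  rcases hp with hp | hp
  · exact dropLast_snd_pos_decomp w p hp
  · simp only [List.mem_singleton] at hp
    subst hp
    exact getLast_snd_pos_decomp w h2 _ (List.getLast?_eq_getLast hne)

lemma decomp_trues (a : ℕ) (v : List Bool) (a' b : ℕ) (l : List (ℕ × ℕ))
    (hv : decomp v = (a', b) :: l) :
    decomp (List.replicate a true ++ v) = (a + a', b) :: l := by
  induction a with
  | zero => simpa using hv
  | succ a ih =>
    rw [List.replicate_succ, List.cons_append,
      show decomp (true :: (List.replicate a true ++ v)) = consT _ from rfl, ih]
    simp [consT]
    omega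

lemma decomp_falses (b : ℕ) (v : List Bool) (hb : 1 ≤ b)
    (hv : decomp v = [] ∨ ∃ a' b' l, decomp v = (a' + 1, b') :: l) :
    decomp (List.replicate b false ++ v) = (0, b) :: decomp v := by
  induction b with
  | zero => omega
  | succ b ih =>
    cases b with
    | zero =>
      rw [List.replicate_one, List.singleton_append,
        show decomp (false :: v) = consF _ from rfl]
      rcases hv with h | ⟨a', b', l, h⟩ <;> rw [h] <;> simp
    | succ b =>
      rw [List.replicate_succ, List.cons_append,
        show decomp (false :: (List.replicate (b+1) false ++ v)) = consF _ from rfl,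
        ih (by omega)]
      simp

lemma head?_wordOf (l : List (ℕ × ℕ)) (hl : ∀ p ∈ l, 1 ≤ p.1) (hne : l ≠ []) :
    (wordOf l).head? = some true := by
  cases l with
  | nil => simp at hne
  | cons p l =>
    rw [wordOf_cons, List.append_assoc, head?_replicate_append true p.1 (hl p (by simp))]

lemma decomp_wordOf (l : List (ℕ × ℕ)) (hl : ∀ p ∈ l, 1 ≤ p.1 ∧ 1 ≤ p.2) :
    decomp (wordOf l) = l := by
  induction l with
  | nil => rfl
  | cons p l ih =>
    obtain ⟨a, b⟩ := p
    have ihl : decomp (wordOf l) = l := ih (fun q hq => hl q (by simp [hq]))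
    have hfalses : decomp (List.replicate b false ++ wordOf l) = (0, b) :: l := by
      rw [decomp_falses b _ (hl (a, b) (by simp)).2, ihl]
      cases l with
      | nil => left; rfl
      | cons q t =>
        right
        obtain ⟨q1, q2⟩ := q
        have : 1 ≤ q1 := (hl (q1, q2) (by simp)).1
        obtain ⟨q0, rfl⟩ : ∃ q0, q1 = q0 + 1 := ⟨q1 - 1, by omega⟩
        rw [ihl]
        exact ⟨q0, q2, t, rfl⟩
    rw [wordOf_cons, List.append_assoc, decomp_trues a _ 0 b l hfalses]
    simp

/-! ### incrementing/decrementing the last block's second component -/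

def incL : List (ℕ × ℕ) → List (ℕ × ℕ)
  | [] => []
  | [(a, b)] => [(a, b + 1)]
  | p :: l => p :: incL l

def decL : List (ℕ × ℕ) → List (ℕ × ℕ)
  | [] => []
  | [(a, b)] => [(a, b - 1)]
  | p :: l => p :: decL l

@[simp] lemma incL_singleton (a b : ℕ) : incL [(a, b)] = [(a, b + 1)] := rfl
@[simp] lemma decL_singleton (a b : ℕ) : decL [(a, b)] = [(a, b - 1)] := rfl
lemma incL_cons₂ (p q : ℕ × ℕ) (l : List (ℕ × ℕ)) :
    incL (p :: q :: l) = p :: incL (q :: l) := rfl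
lemma decL_cons₂ (p q : ℕ × ℕ) (l : List (ℕ × ℕ)) :
    decL (p :: q :: l) = p :: decL (q :: l) := rfl

lemma length_incL (l : List (ℕ × ℕ)) : (incL l).length = l.length := by
  induction l with
  | nil => rfl
  | cons p l ih =>
    cases l with
    | nil => obtain ⟨a, b⟩ := p; rfl
    | cons q t => rw [incL_cons₂]; simp only [List.length_cons] at ih ⊢; omega

lemma length_decL (l : List (ℕ × ℕ)) : (decL l).length = l.length := by
  induction l with
  | nil => rfl
  | cons p l ih =>
    cases l with
    | nil => obtain ⟨a, b⟩ := p; rfl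
    | cons q t => rw [decL_cons₂]; simp only [List.length_cons] at ih ⊢; omega

lemma map_fst_incL (l : List (ℕ × ℕ)) : (incL l).map Prod.fst = l.map Prod.fst := by
  induction l with
  | nil => rfl
  | cons p l ih =>
    cases l with
    | nil => obtain ⟨a, b⟩ := p; rfl
    | cons q t => rw [incL_cons₂]; simp only [List.map_cons] at ih ⊢; rw [ih]

lemma map_fst_decL (l : List (ℕ × ℕ)) : (decL l).map Prod.fst = l.map Prod.fst := by
  induction l with
  | nil => rfl
  | cons p l ih =>
    cases l with
    | nil => obtain ⟨a, b⟩ := p; rfl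
    | cons q t => rw [decL_cons₂]; simp only [List.map_cons] at ih ⊢; rw [ih]

lemma sum_snd_incL (l : List (ℕ × ℕ)) (hne : l ≠ []) :
    ((incL l).map Prod.snd).sum = (l.map Prod.snd).sum + 1 := by
  induction l with
  | nil => simp at hne
  | cons p l ih =>
    cases l with
    | nil => obtain ⟨a, b⟩ := p; simp
    | cons q t =>
      rw [incL_cons₂]
      simp only [List.map_cons, List.sum_cons, ih (by simp)]
      ring

lemma wordOf_incL (l : List (ℕ × ℕ)) (hne : l ≠ []) :
    wordOf (incL l) = wordOf l ++ [false] := by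
  induction l with
  | nil => simp at hne
  | cons p l ih =>
    cases l with
    | nil =>
      obtain ⟨a, b⟩ := p
      simp [List.replicate_succ']
    | cons q t =>
      rw [incL_cons₂, wordOf_cons, wordOf_cons, ih (by simp)]
      simp

lemma incL_decL (l : List (ℕ × ℕ)) (hl : ∀ q, l.getLast? = some q → 1 ≤ q.2) :
    incL (decL l) = l := by
  induction l with
  | nil => rfl
  | cons p l ih =>
    cases l with
    | nil =>
      obtain ⟨a, b⟩ := p
      have : 1 ≤ b := hl (a, b) (by simp)
      simp only [decL_singleton, incL_singleton]
      congr 2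
      omega
    | cons q t =>
      rw [decL_cons₂]
      have h2 : decL (q :: t) ≠ [] := by
        intro h
        have := length_decL (q :: t)
        rw [h] at this
        simp at this
      obtain ⟨r, s, hr⟩ : ∃ r s, decL (q :: t) = r :: s := by
        cases hd : decL (q :: t) with
        | nil => exact absurd hd h2
        | cons r s => exact ⟨r, s, rfl⟩
      rw [hr, incL_cons₂, ← hr, ih]
      intro q' hq'
      apply hl
      rw [List.getLast?_cons_cons]
      exact hq'

lemma snd_pos_decL (l : List (ℕ × ℕ)) (h1 : ∀ p ∈ l, 1 ≤ p.2)
    (h2 : ∀ q, l.getLast? = some q → 2 ≤ q.2) :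
    ∀ p ∈ decL l, 1 ≤ p.2 := by
  induction l with
  | nil => intro p hp; simp [decL] at hp
  | cons p l ih =>
    cases l with
    | nil =>
      obtain ⟨a, b⟩ := p
      have : 2 ≤ b := h2 (a, b) (by simp)
      intro p hp
      simp only [decL_singleton, List.mem_singleton] at hp
      subst hp
      simp
      omega
    | cons q t =>
      rw [decL_cons₂]
      intro r hr
      rcases List.mem_cons.1 hr with rfl | hr
      · exact h1 r (by simp)
      · refine ih (fun p hp => h1 p (by simp [hp])) (fun q' hq' => h2 q' ?_) r hr
        rw [List.getLast?_cons_cons]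
        exact hq'

lemma getLast?_wordOf_snd_zero (l : List (ℕ × ℕ)) (a : ℕ) (ha : 1 ≤ a)
    (h : l.getLast? = some (a, 0)) : (wordOf l).getLast? = some true := by
  have hne : l ≠ [] := by intro h'; rw [h'] at h; simp at h
  have hsplit := List.dropLast_append_getLast hne
  have hlast : l.getLast hne = (a, 0) := by
    have := List.getLast?_eq_getLast hne
    rw [h] at this
    exact (Option.some_inj.1 this.symm)
  rw [← hsplit, wordOf_append, hlast]
  rw [List.getLast?_append_of_ne_nil]
  · rw [show wordOf [(a, 0)] = List.replicate a true by simp [wordOf, blockW]]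
    cases a with
    | zero => omega
    | succ a =>
      rw [List.replicate_succ']
      simp
  · intro hcon
    have : (wordOf [(a, 0)]).length = 0 := by rw [hcon]; rfl
    rw [length_wordOf] at this
    simp at this
    omega

/-! ### values and the cycle lemma -/

def val (k : ℕ) (w : List Bool) : ℤ := k * w.count true - w.count false

lemma val_append (k : ℕ) (p q : List Bool) : val k (p ++ q) = val k p + val k q := by
  simp only [val, List.count_append]
  push_cast
  ring

@[simp] lemma val_nil (k : ℕ) : val k [] = 0 := by simp [val]

lemma val_true (k : ℕ) : val k [true] = (k : ℤ) := by simp [val]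

lemma val_false (k : ℕ) : val k [false] = -1 := by simp [val]

lemma val_rotate (k : ℕ) (v : List Bool) (r : ℕ) : val k (v.rotate r) = val k v := by
  simp only [val, (List.rotate_perm v r).count_eq]

def GoodRot (k : ℕ) (v : List Bool) (r : ℕ) : Prop :=
  ∀ p, p <+: v.rotate r → p.length < v.length → 0 ≤ val k p

lemma goodRot_iff (k : ℕ) (v : List Bool) (r : ℕ) :
    GoodRot k v r ↔ ∀ m, m < v.length → 0 ≤ val k ((v.rotate r).take m) := by
  constructor
  · intro h m hm
    exact h _ (List.take_prefix _ _) (by rw [List.length_take, List.length_rotate]; omega)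
  · intro h p hp hlen
    have := List.prefix_iff_eq_take.1 hp
    rw [this]
    exact h p.length hlen

lemma val_take_rotate_low (k : ℕ) (v : List Bool) (r m : ℕ) (hr : r ≤ v.length)
    (hm : m ≤ v.length - r) :
    val k ((v.rotate r).take m) = val k (v.take (r + m)) - val k (v.take r) := by
  rw [List.rotate_eq_drop_append_take hr]
  rw [List.take_append]
  have h1 : m - (v.drop r).length = 0 := by rw [List.length_drop]; omega
  rw [h1, List.take_zero, List.append_nil]
  have h2 : v.take (r + m) = v.take r ++ (v.drop r).take m := List.take_add
  rw [h2, val_append]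
  ring

lemma val_take_rotate_high (k : ℕ) (v : List Bool) (r m : ℕ) (hr : r ≤ v.length)
    (hm1 : v.length - r ≤ m) (hm2 : m ≤ v.length) :
    val k ((v.rotate r).take m) =
      val k v - val k (v.take r) + val k (v.take (m - (v.length - r))) := by
  rw [List.rotate_eq_drop_append_take hr]
  rw [List.take_append]
  have h1 : (v.drop r).take m = v.drop r := by
    apply List.take_of_length_le
    rw [List.length_drop]
    omega
  have h2 : (v.take r).take (m - (v.drop r).length) = v.take (m - (v.length - r)) := by
    rw [List.take_take, List.length_drop]
    congr 1
    omega
  rw [h1, h2, val_append]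
  have h3 : val k v = val k (v.take r) + val k (v.drop r) := by
    rw [← val_append, List.take_append_drop]
  omega

lemma val_take_len (k : ℕ) (v : List Bool) : val k (v.take v.length) = val k v := by
  rw [List.take_of_length_le le_rfl]

lemma length_pos_of_val_neg (k : ℕ) (v : List Bool) (hv : val k v = -1) : 1 ≤ v.length := by
  by_contra h
  have : v = [] := by
    cases v with
    | nil => rfl
    | cons x w => simp at h
  rw [this] at hv
  simp at hv

lemma goodRot_factA (k : ℕ) (v : List Bool) (r : ℕ) (hr1 : 1 ≤ r) (hr2 : r < v.length)
    (hgood : GoodRot k v r) :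
    ∀ q, r ≤ q → q ≤ v.length → val k (v.take r) ≤ val k (v.take q) := by
  intro q hq1 hq2
  have := (goodRot_iff k v r).1 hgood (q - r) (by omega)
  rw [val_take_rotate_low k v r (q - r) (by omega) (by omega)] at this
  have hq : r + (q - r) = q := by omega
  rw [hq] at this
  omega

lemma goodRot_factB (k : ℕ) (v : List Bool) (r : ℕ) (hv : val k v = -1)
    (hr1 : 1 ≤ r) (hr2 : r < v.length) (hgood : GoodRot k v r) :
    ∀ q, 1 ≤ q → q < r → val k (v.take r) ≤ val k (v.take q) - 1 := by
  intro q hq1 hq2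
  have := (goodRot_iff k v r).1 hgood (q + (v.length - r)) (by omega)
  rw [val_take_rotate_high k v r _ (by omega) (by omega) (by omega)] at this
  have hq : q + (v.length - r) - (v.length - r) = q := by omega
  rw [hq, hv] at this
  omega

theorem cycle_unique (k : ℕ) (v : List Bool) (hv : val k v = -1) (r1 r2 : ℕ)
    (h1 : r1 < v.length) (h2 : r2 < v.length) (g1 : GoodRot k v r1) (g2 : GoodRot k v r2) :
    r1 = r2 := by
  have hL : val k (v.take v.length) = -1 := by rw [val_take_len]; exact hv
  have factC : ∀ r, r < v.length → GoodRot k v r → 1 ≤ r → val k (v.take r) ≤ -1 := by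
    intro r hr hgood hr1
    have := goodRot_factA k v r hr1 hr hgood v.length hr.le le_rfl
    omega
  have factZ : ∀ r, r < v.length → GoodRot k v r → r = 0 →
      ∀ q, q < v.length → 0 ≤ val k (v.take q) := by
    intro r hr hgood hr0 q hq
    subst hr0
    have := (goodRot_iff k v 0).1 hgood q hq
    rw [List.rotate_zero] at this
    exact this
  rcases Nat.lt_trichotomy r1 r2 with h | h | h
  · rcases Nat.eq_zero_or_pos r1 with rfl | hpos
    · have hz := factZ 0 h1 g1 rfl r2 h2
      have hc := factC r2 h2 g2 (by omega)
      omega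
    · have hA := goodRot_factA k v r1 hpos h1 g1 r2 h.le h2.le
      have hB := goodRot_factB k v r2 hv (by omega) h2 g2 r1 hpos h
      omega
  · exact h
  · rcases Nat.eq_zero_or_pos r2 with rfl | hpos
    · have hz := factZ 0 h2 g2 rfl r1 h1
      have hc := factC r1 h1 g1 (by omega)
      omega
    · have hA := goodRot_factA k v r2 hpos h2 g2 r1 h.le h1.le
      have hB := goodRot_factB k v r1 hv (by omega) h1 g1 r2 hpos h
      omega

theorem cycle_exists (k : ℕ) (v : List Bool) (hv : val k v = -1) :
    ∃ r, r < v.length ∧ GoodRot k v r := by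
  have hlen : 1 ≤ v.length := length_pos_of_val_neg k v hv
  have hL : val k (v.take v.length) = -1 := by rw [val_take_len]; exact hv
  have hexists : ∃ m, m ≤ v.length ∧ ∀ q, q ≤ v.length → val k (v.take m) ≤ val k (v.take q) := by
    obtain ⟨r, hr, hmin⟩ := Finset.exists_min_image (Finset.range (v.length + 1))
      (fun m => val k (v.take m)) ⟨0, by simp⟩
    refine ⟨r, by have := Finset.mem_range.1 hr; omega, fun q hq => hmin q ?_⟩
    exact Finset.mem_range.2 (by omega)
  classical
  obtain ⟨hr0le, hr0min⟩ := Nat.find_spec hexists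
  have hfirst : ∀ q, q < Nat.find hexists → q ≤ v.length →
      val k (v.take (Nat.find hexists)) < val k (v.take q) := by
    intro q hq hqle
    have hnot := Nat.find_min hexists hq
    push_neg at hnot
    obtain ⟨q', hq', hgq'⟩ := hnot hqle
    have := hr0min q' hq'
    omega
  rcases lt_or_ge (Nat.find hexists) v.length with hcase | hcase
  · have hpos : 1 ≤ Nat.find hexists := by
      by_contra h
      have hr00 : Nat.find hexists = 0 := by omega
      have h0 := hr0min v.length le_rfl
      rw [hr00] at h0
      rw [List.take_zero, val_nil] at h0
      omega
    refine ⟨Nat.find hexists, hcase, (goodRot_iff k v _).2 fun m hm => ?_⟩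
    rcases le_or_gt m (v.length - Nat.find hexists) with hm2 | hm2
    · rw [val_take_rotate_low k v _ m hcase.le hm2]
      have := hr0min (Nat.find hexists + m) (by omega)
      omega
    · rw [val_take_rotate_high k v _ m hcase.le (by omega) (by omega)]
      have := hfirst (m - (v.length - Nat.find hexists)) (by omega) (by omega)
      omega
  · have hr0eq : Nat.find hexists = v.length := by omega
    refine ⟨0, by omega, (goodRot_iff k v 0).2 fun m hm => ?_⟩
    rw [List.rotate_zero]
    have := hfirst m (by omega) (by omega)
    rw [hr0eq, hL] at this
    omega

lemma goodRot_head (k : ℕ) (v : List Bool) (r : ℕ) (hr : r < v.length)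
    (hlen : 2 ≤ v.length) (h : GoodRot k v r) : (v.drop r).head? = some true := by
  cases hd : v.drop r with
  | nil =>
    have : (v.drop r).length = v.length - r := List.length_drop
    rw [hd] at this
    simp only [List.length_nil] at this
    omega
  | cons c rest =>
    have hrot : v.rotate r = c :: (rest ++ v.take r) := by
      rw [List.rotate_eq_drop_append_take hr.le, hd]
      simp
    have hpre : [c] <+: v.rotate r := by
      rw [hrot]
      exact ⟨rest ++ v.take r, rfl⟩
    have hval := h [c] hpre (by simp only [List.length_cons, List.length_nil]; omega)
    cases c
    · rw [val_false] at hval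
      omega
    · simp

lemma goodRot_last (k : ℕ) (v : List Bool) (r : ℕ) (hr : r < v.length)
    (hv : val k v = -1) (h : GoodRot k v r) : (v.rotate r).getLast? = some false := by
  have hne : v.rotate r ≠ [] := by
    intro hcon
    have := List.length_rotate v r
    rw [hcon] at this
    simp only [List.length_nil] at this
    omega
  have hsplit := List.dropLast_append_getLast hne
  have hpre : (v.rotate r).dropLast <+: v.rotate r := ⟨_, hsplit⟩
  have hlen : (v.rotate r).dropLast.length < v.length := by
    rw [List.length_dropLast, List.length_rotate]
    omega
  have hval := h _ hpre hlen
  have hvu : val k (v.rotate r) = -1 := by rw [val_rotate]; exact hv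
  have hsum : val k (v.rotate r).dropLast + val k [(v.rotate r).getLast hne] = -1 := by
    rw [← val_append, hsplit]
    exact hvu
  have hlast : (v.rotate r).getLast hne = false := by
    cases hg : (v.rotate r).getLast hne
    · rfl
    · exfalso
      rw [hg, val_true] at hsum
      have : (0 : ℤ) ≤ (k : ℤ) := by positivity
      omega
  rw [List.getLast?_eq_getLast hne, hlast]

lemma goodRot_take_last (k : ℕ) (v : List Bool) (r : ℕ) (hr : r < v.length) (hr1 : 1 ≤ r)
    (hv : val k v = -1) (h : GoodRot k v r) : (v.take r).getLast? = some false := by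
  have hL := goodRot_last k v r hr hv h
  rw [List.rotate_eq_drop_append_take hr.le] at hL
  rwa [List.getLast?_append_of_ne_nil] at hL
  intro hcon
  have : (v.take r).length = min r v.length := List.length_take
  rw [hcon] at this
  simp only [List.length_nil] at this
  omega

/-! ### block boundaries -/

lemma take_replicate' {α} (x : α) (a r : ℕ) :
    (List.replicate a x).take r = List.replicate (min r a) x := by
  induction a generalizing r with
  | zero => simp
  | succ a ih =>
    cases r with
    | zero => simp
    | succ r => simp [List.replicate_succ, ih, Nat.succ_min_succ]

lemma drop_replicate' {α} (x : α) (a r : ℕ) :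
    (List.replicate a x).drop r = List.replicate (a - r) x := by
  induction a generalizing r with
  | zero => simp
  | succ a ih =>
    cases r with
    | zero => simp
    | succ r => simp [List.replicate_succ, ih]

lemma getLast?_replicate {α} (x : α) (a : ℕ) (ha : 1 ≤ a) :
    (List.replicate a x).getLast? = some x := by
  cases a with
  | zero => omega
  | succ a => rw [List.replicate_succ', List.getLast?_concat]

lemma length_block (a b : ℕ) :
    (List.replicate a true ++ List.replicate b false).length = a + b := by
  simp

lemma boundary (l : List (ℕ × ℕ)) (hl : ∀ p ∈ l, 1 ≤ p.1 ∧ 1 ≤ p.2) (r : ℕ)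
    (hr : r ≤ (wordOf l).length)
    (hhead : ((wordOf l).drop r).head? = some true)
    (hlast : r = 0 ∨ ((wordOf l).take r).getLast? = some false) :
    ∃ m, m ≤ l.length ∧ r = (wordOf (l.take m)).length := by
  induction l generalizing r with
  | nil =>
    refine ⟨0, by simp, ?_⟩
    simp only [wordOf_nil, List.length_nil] at hr
    simp only [List.take_nil, wordOf_nil, List.length_nil]
    omega
  | cons p l' ih =>
    obtain ⟨a, b⟩ := p
    have ha : 1 ≤ a := (hl (a, b) (by simp)).1
    have hb : 1 ≤ b := (hl (a, b) (by simp)).2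
    rcases hlast with rfl | hlast2
    · exact ⟨0, by simp, by simp⟩
    have hr1 : 1 ≤ r := by
      by_contra h
      have : r = 0 := by omega
      subst this
      simp at hlast2
    set block : List Bool := List.replicate a true ++ List.replicate b false with hblock
    have hword : wordOf ((a, b) :: l') = block ++ wordOf l' := by
      rw [wordOf_cons]
    have hlb : block.length = a + b := length_block a b
    rcases le_or_gt r (a + b) with hcase | hcase
    · have htake : (wordOf ((a, b) :: l')).take r = block.take r := by
        rw [hword, List.take_append]
        have : r - block.length = 0 := by omega
        rw [this, List.take_zero, List.append_nil]
      rcases le_or_gt r a with hra | hra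
      · exfalso
        have : block.take r = List.replicate r true := by
          rw [hblock, List.take_append, take_replicate',
            min_eq_left hra]
          have : r - (List.replicate a true).length = 0 := by simp; omega
          rw [this, List.take_zero, List.append_nil]
        rw [htake, this, getLast?_replicate true r hr1] at hlast2
        simp at hlast2
      · rcases lt_or_eq_of_le hcase with hcase2 | hcase2
        · exfalso
          have hdrop : (wordOf ((a, b) :: l')).drop r =
              List.replicate (b - (r - a)) false ++ wordOf l' := by
            rw [hword, List.drop_append, hblock,
              List.drop_append, drop_replicate', drop_replicate']
            have h1 : a - r = 0 := by omega
            have h2 : r - (List.replicate a true).length = r - a := by simp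
            have h3 : r - block.length = 0 := by omega
            rw [h1, h2, h3]
            simp
          rw [hdrop, head?_replicate_append false _ (by omega)] at hhead
          simp at hhead
        · refine ⟨1, Nat.succ_le_succ (Nat.zero_le _), ?_⟩
          rw [show List.take 1 ((a, b) :: l') = [(a, b)] from rfl]
          rw [show wordOf [(a, b)] = block by rw [hblock]; simp [wordOf, blockW]]
          omega
    · have hr' : r - (a + b) ≤ (wordOf l').length := by
        rw [hword, List.length_append, hlb] at hr
        omega
      have hdrop : (wordOf ((a, b) :: l')).drop r = (wordOf l').drop (r - (a + b)) := by
        rw [hword, List.drop_append,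
          List.drop_eq_nil_of_le (by omega), List.nil_append, hlb]
      have htake : (wordOf ((a, b) :: l')).take r = block ++ (wordOf l').take (r - (a + b)) := by
        rw [hword, List.take_append, List.take_of_length_le (by omega), hlb]
      have htne : (wordOf l').take (r - (a + b)) ≠ [] := by
        intro hcon
        have : ((wordOf l').take (r - (a + b))).length = min (r - (a + b)) (wordOf l').length := List.length_take
        rw [hcon] at this
        simp only [List.length_nil] at this
        omega
      have hlast' : ((wordOf l').take (r - (a + b))).getLast? = some false := by
        rw [htake, List.getLast?_append_of_ne_nil _ htne] at hlast2
        exact hlast2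
      have hhead' : ((wordOf l').drop (r - (a + b))).head? = some true := by
        rw [hdrop] at hhead
        exact hhead
      obtain ⟨m', hm', hreq⟩ := ih (fun q hq => hl q (by simp [hq])) (r - (a + b)) hr'
        hhead' (Or.inr hlast')
      refine ⟨m' + 1, by simp only [List.length_cons]; omega, ?_⟩
      rw [show List.take (m' + 1) ((a, b) :: l') = (a, b) :: List.take m' l' from rfl,
        wordOf_cons, List.length_append, List.length_append]
      simp only [List.length_replicate]
      omega

/-! ### paths -/

lemma path_ne_nil {k n : ℕ} {w : List Bool} (hn : 1 ≤ n) (h : IsKaryPath k n w) :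
    w ≠ [] := by
  intro hcon
  have := h.1
  rw [hcon] at this
  simp at this
  omega

lemma path_head {k n : ℕ} {w : List Bool} (hn : 1 ≤ n) (h : IsKaryPath k n w) :
    w.head? = some true := by
  cases hw : w with
  | nil => exact absurd hw (path_ne_nil hn h)
  | cons x w' =>
    cases x
    · exfalso
      have hpre : [false] <+: w := by rw [hw]; exact ⟨w', rfl⟩
      have := h.2.2 [false] hpre
      simp at this
    · rfl

lemma path_getLast {k n : ℕ} {w : List Bool} (hk : 1 ≤ k) (hn : 1 ≤ n)
    (h : IsKaryPath k n w) : w.getLast? = some false := by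
  have hne : w ≠ [] := path_ne_nil hn h
  have hsplit := List.dropLast_append_getLast hne
  cases hg : w.getLast hne
  · rw [List.getLast?_eq_getLast hne, hg]
  · exfalso
    have hpre : w.dropLast <+: w := ⟨_, hsplit⟩
    have hineq := h.2.2 _ hpre
    have h21 := h.2.1
    have h11 := h.1
    have hcf : w.dropLast.count false = k * n := by
      have hxx : w.count false = w.dropLast.count false + [w.getLast hne].count false := by
        rw [← List.count_append, hsplit]
      rw [hg] at hxx
      simp at hxx
      omega
    have hct' : w.dropLast.count true = n - 1 := by
      have hxx : w.count true = w.dropLast.count true + [w.getLast hne].count true := by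
        rw [← List.count_append, hsplit]
      rw [hg] at hxx
      simp at hxx
      omega
    rw [hcf, hct'] at hineq
    have hlt : k * (n - 1) < k * n :=
      mul_lt_mul_of_pos_left (by omega) (by omega)
    have hlt' : ((k : ℤ) * ((n : ℤ) - 1) : ℤ) < (k * n : ℤ) := by
      have : ((k * (n-1) : ℕ) : ℤ) < ((k * n : ℕ) : ℤ) := by exact_mod_cast hlt
      push_cast [Nat.cast_sub hn] at this
      push_cast
      linarith
    push_cast [Nat.cast_sub hn] at hineq
    linarith

lemma path_val {k n : ℕ} {w : List Bool} (h : IsKaryPath k n w) : val k w = 0 := by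
  unfold val
  rw [h.1, h.2.1]
  push_cast
  ring

lemma goodRot_zero_of_path {k n : ℕ} {w : List Bool} (h : IsKaryPath k n w) :
    GoodRot k (w ++ [false]) 0 := by
  intro p hp hlen
  rw [List.rotate_zero] at hp
  rw [List.length_append, List.length_cons, List.length_nil] at hlen
  have hple : p.length ≤ w.length := by omega
  have hp' : p <+: w := by
    have heq := List.prefix_iff_eq_take.1 hp
    rw [List.take_append, Nat.sub_eq_zero_of_le hple,
      List.take_zero, List.append_nil] at heq
    rw [heq]
    exact List.take_prefix _ _
  have := h.2.2 p hp'
  unfold val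
  linarith

lemma wordOf_ne_nil (l : List (ℕ × ℕ)) (hl : ∀ p ∈ l, 1 ≤ p.1 ∧ 1 ≤ p.2)
    (hne : l ≠ []) : wordOf l ≠ [] := by
  intro hcon
  have := head?_wordOf l (fun p hp => (hl p hp).1) hne
  rw [hcon] at this
  simp at this

lemma rotate_wordOf (l : List (ℕ × ℕ)) (m : ℕ) (hm : m ≤ l.length) :
    (wordOf l).rotate ((wordOf (l.take m)).length) = wordOf (l.rotate m) := by
  have hsplit : wordOf l = wordOf (l.take m) ++ wordOf (l.drop m) := by
    rw [← wordOf_append, List.take_append_drop]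
  have hlen : (wordOf (l.take m)).length ≤ (wordOf l).length := by
    rw [hsplit, List.length_append]
    omega
  rw [List.rotate_eq_drop_append_take hlen, List.rotate_eq_drop_append_take hm]
  rw [wordOf_append]
  congr 1
  · conv_lhs => rw [hsplit]
    exact List.drop_left
  · conv_lhs => rw [hsplit]
    exact List.take_left

lemma mem_incL (l : List (ℕ × ℕ)) (p : ℕ × ℕ) (hp : p ∈ incL l) :
    p ∈ l ∨ ∃ q ∈ l, p = (q.1, q.2 + 1) := by
  induction l with
  | nil => simp [incL] at hp
  | cons r l ih =>
    cases l with
    | nil =>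
      obtain ⟨a, b⟩ := r
      simp only [incL_singleton, List.mem_singleton] at hp
      exact Or.inr ⟨(a, b), by simp, hp⟩
    | cons q t =>
      rw [incL_cons₂] at hp
      rcases List.mem_cons.1 hp with rfl | hp'
      · exact Or.inl (by simp)
      · rcases ih hp' with h | ⟨q', hq', hpq⟩
        · exact Or.inl (by simp [h])
        · exact Or.inr ⟨q', by simp [hq'], hpq⟩

lemma fst_pos_decL (l : List (ℕ × ℕ)) (h1 : ∀ p ∈ l, 1 ≤ p.1) :
    ∀ p ∈ decL l, 1 ≤ p.1 := by
  induction l with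
  | nil => intro p hp; simp [decL] at hp
  | cons r l ih =>
    cases l with
    | nil =>
      obtain ⟨a, b⟩ := r
      intro p hp
      simp only [decL_singleton, List.mem_singleton] at hp
      subst hp
      exact h1 (a, b) (by simp)
    | cons q t =>
      rw [decL_cons₂]
      intro p hp
      rcases List.mem_cons.1 hp with rfl | hp'
      · exact h1 p (by simp)
      · exact ih (fun p' hp' => h1 p' (by simp [hp'])) p hp'

lemma getLast?_decL (l : List (ℕ × ℕ)) (q : ℕ × ℕ) (hq : l.getLast? = some q) :
    (decL l).getLast? = some (q.1, q.2 - 1) := by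
  induction l with
  | nil => simp at hq
  | cons r l ih =>
    cases l with
    | nil =>
      obtain ⟨a, b⟩ := r
      simp only [List.getLast?_singleton, Option.some_inj] at hq
      subst hq
      simp
    | cons q' t =>
      rw [List.getLast?_cons_cons] at hq
      rw [decL_cons₂]
      obtain ⟨r', s', hr'⟩ : ∃ r' s', decL (q' :: t) = r' :: s' := by
        cases hd : decL (q' :: t) with
        | nil =>
          have := length_decL (q' :: t)
          rw [hd] at this
          simp at this
        | cons r' s' => exact ⟨r', s', rfl⟩
      rw [hr', List.getLast?_cons_cons, ← hr']
      exact ih hq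

/-! ### the bijection -/

lemma good_incL (l : List (ℕ × ℕ)) (hl : ∀ p ∈ l, 1 ≤ p.1 ∧ 1 ≤ p.2) :
    ∀ p ∈ incL l, 1 ≤ p.1 ∧ 1 ≤ p.2 := by
  intro p hp
  rcases mem_incL l p hp with h | ⟨q, hq, rfl⟩
  · exact hl p h
  · exact ⟨(hl q hq).1, by omega⟩

lemma goodRot_of_rotate (k : ℕ) (v : List Bool) (ρ : ℕ)
    (h : GoodRot k (v.rotate ρ) 0) : GoodRot k v ρ := by
  intro p hp hl
  refine h p ?_ ?_
  · rwa [List.rotate_zero]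
  · rwa [List.length_rotate]

section Main

variable {k n j : ℕ}

lemma decomp_facts (hk : 1 ≤ k) (hn : 1 ≤ n) {w : List Bool} (hw : IsKaryPath k n w) :
    (∀ p ∈ decomp w, 1 ≤ p.1 ∧ 1 ≤ p.2) ∧ ((decomp w).map Prod.fst).sum = n ∧
      ((decomp w).map Prod.snd).sum = k * n ∧ decomp w ≠ [] := by
  refine ⟨goodBlocks_decomp w (path_head hn hw) (path_getLast hk hn hw), ?_, ?_,
    decomp_ne_nil (path_ne_nil hn hw)⟩
  · rw [← count_true_wordOf, wordOf_decomp, hw.1]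
  · rw [← count_false_wordOf, wordOf_decomp, hw.2.1]

lemma wordOf_incL_decomp (hk : 1 ≤ k) (hn : 1 ≤ n) {w : List Bool}
    (hw : IsKaryPath k n w) : wordOf (incL (decomp w)) = w ++ [false] := by
  rw [wordOf_incL _ (decomp_facts hk hn hw).2.2.2, wordOf_decomp]

lemma val_vWord (hk : 1 ≤ k) (hn : 1 ≤ n) {w : List Bool} (hw : IsKaryPath k n w) :
    val k (wordOf (incL (decomp w))) = -1 := by
  rw [wordOf_incL_decomp hk hn hw, val_append, path_val hw, val_false]
  ring

lemma length_incL_decomp (hk : 1 ≤ k) (hn : 1 ≤ n) {w : List Bool}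
    (hw : IsKaryPath k n w) (hpk : numPeaks w = j) : (incL (decomp w)).length = j := by
  rw [length_incL]
  have := numPeaks_wordOf (decomp w) (decomp_facts hk hn hw).1
  rw [wordOf_decomp] at this
  omega

lemma phi_mem (hk : 1 ≤ k) (hn : 1 ≤ n) (t : ℕ) {w : List Bool}
    (hw : IsKaryPath k n w) (hpk : numPeaks w = j) :
    ((incL (decomp w)).rotate t).length = j ∧
      (∀ p ∈ (incL (decomp w)).rotate t, 1 ≤ p.1 ∧ 1 ≤ p.2) ∧
      (((incL (decomp w)).rotate t).map Prod.fst).sum = n ∧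
      (((incL (decomp w)).rotate t).map Prod.snd).sum = k * n + 1 := by
  obtain ⟨hgood, hsf, hss, hne⟩ := decomp_facts hk hn hw
  have hperm := List.rotate_perm (incL (decomp w)) t
  refine ⟨?_, ?_, ?_, ?_⟩
  · rw [List.length_rotate, length_incL_decomp hk hn hw hpk]
  · intro p hp
    exact good_incL _ hgood p (hperm.subset hp)
  · rw [(hperm.map Prod.fst).sum_eq, map_fst_incL, hsf]
  · rw [(hperm.map Prod.snd).sum_eq, sum_snd_incL _ hne, hss]

lemma good_unique_u (hk : 1 ≤ k) (hn : 1 ≤ n) {w w' : List Bool}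
    (hw : IsKaryPath k n w) (hw' : IsKaryPath k n w') (u : ℕ)
    (hu : u < (incL (decomp w)).length)
    (heq : (incL (decomp w)).rotate u = incL (decomp w')) : u = 0 := by
  by_contra hu0
  have hu1 : 1 ≤ u := by omega
  set lb := incL (decomp w) with hlb
  have hgb : ∀ p ∈ lb, 1 ≤ p.1 ∧ 1 ≤ p.2 :=
    good_incL _ (decomp_facts hk hn hw).1
  have hv : val k (wordOf lb) = -1 := val_vWord hk hn hw
  have hg0 : GoodRot k (wordOf lb) 0 := by
    rw [wordOf_incL_decomp hk hn hw]
    exact goodRot_zero_of_path hw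
  have hrot : (wordOf lb).rotate ((wordOf (lb.take u)).length) = wordOf (lb.rotate u) :=
    rotate_wordOf lb u hu.le
  have hgρ : GoodRot k (wordOf lb) ((wordOf (lb.take u)).length) := by
    apply goodRot_of_rotate
    rw [hrot, heq, wordOf_incL_decomp hk hn hw']
    exact goodRot_zero_of_path hw'
  have htne : lb.take u ≠ [] := by
    intro hcon
    have : (lb.take u).length = min u lb.length := List.length_take
    rw [hcon] at this
    simp only [List.length_nil] at this
    omega
  have hρ1 : 1 ≤ (wordOf (lb.take u)).length := by
    have := wordOf_ne_nil (lb.take u) (fun p hp => hgb p (List.take_subset u lb hp)) htne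
    cases hcon : wordOf (lb.take u) with
    | nil => exact absurd hcon this
    | cons x l => simp [hcon]
  have hρlt : (wordOf (lb.take u)).length < (wordOf lb).length := by
    have hsplit : wordOf lb = wordOf (lb.take u) ++ wordOf (lb.drop u) := by
      rw [← wordOf_append, List.take_append_drop]
    have hdne : lb.drop u ≠ [] := by
      intro hcon
      have : (lb.drop u).length = lb.length - u := List.length_drop
      rw [hcon] at this
      simp only [List.length_nil] at this
      omega
    have := wordOf_ne_nil (lb.drop u) (fun p hp => hgb p (List.drop_subset u lb hp)) hdne
    have hlp : 1 ≤ (wordOf (lb.drop u)).length := by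
      cases hcon : wordOf (lb.drop u) with
      | nil => exact absurd hcon this
      | cons x l => simp [hcon]
    rw [hsplit, List.length_append]
    omega
  have := cycle_unique k (wordOf lb) hv 0 ((wordOf (lb.take u)).length)
    (by omega) hρlt hg0 hgρ
  omega

lemma phi_inj (hk : 1 ≤ k) (hn : 1 ≤ n) (hj : 1 ≤ j) {t1 t2 : ℕ}
    (ht1 : t1 < j) (ht2 : t2 < j) {w1 w2 : List Bool}
    (hw1 : IsKaryPath k n w1) (hp1 : numPeaks w1 = j)
    (hw2 : IsKaryPath k n w2) (hp2 : numPeaks w2 = j)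
    (heq : (incL (decomp w1)).rotate t1 = (incL (decomp w2)).rotate t2) :
    t1 = t2 ∧ w1 = w2 := by
  set lb1 := incL (decomp w1) with hlb1
  set lb2 := incL (decomp w2) with hlb2
  have hlen1 : lb1.length = j := length_incL_decomp hk hn hw1 hp1
  have hlen2 : lb2.length = j := length_incL_decomp hk hn hw2 hp2
  have e1 : (lb2.rotate t2).rotate (j - t2) = lb2 := by
    rw [List.rotate_rotate]
    have ht : t2 + (j - t2) = j := by omega
    rw [ht, ← hlen2, List.rotate_length]
  have e2 : lb1.rotate (t1 + (j - t2)) = lb2 := by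
    rw [← List.rotate_rotate, heq, e1]
  have e3 : lb1.rotate ((t1 + (j - t2)) % j) = lb1.rotate (t1 + (j - t2)) := by
    have := List.rotate_mod lb1 (t1 + (j - t2))
    rw [hlen1] at this
    exact this
  have hult : (t1 + (j - t2)) % j < j := Nat.mod_lt _ (by omega)
  have hu0 : (t1 + (j - t2)) % j = 0 := by
    apply good_unique_u hk hn hw1 hw2 _ ?_ (by rw [e3, e2])
    show (t1 + (j - t2)) % j < lb1.length
    rw [hlen1]
    exact hult
  have hdvd : j ∣ t1 + (j - t2) := Nat.dvd_of_mod_eq_zero hu0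
  obtain ⟨c, hc⟩ := hdvd
  have hx1 : 1 ≤ t1 + (j - t2) := by omega
  have hx2 : t1 + (j - t2) < 2 * j := by omega
  have hc1 : c = 1 := by
    by_contra hcne
    rcases Nat.lt_or_ge c 1 with hc0 | hc2'
    · have : c = 0 := by omega
      subst this
      simp at hc
      omega
    · have hc2 : 2 ≤ c := by omega
      have h2 : j * 2 ≤ j * c := Nat.mul_le_mul_left j hc2
      omega
  rw [hc1, Nat.mul_one] at hc
  have ht12 : t1 = t2 := by omega
  subst ht12
  refine ⟨rfl, ?_⟩
  have hlb12 : lb1 = lb2 := by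
    have hu' : t1 + (j - t1) = j := by omega
    have := e2
    rw [hu', ← hlen1, List.rotate_length] at this
    exact this
  have hw12 : w1 ++ [false] = w2 ++ [false] := by
    rw [← wordOf_incL_decomp hk hn hw1, ← wordOf_incL_decomp hk hn hw2, ← hlb1, ← hlb2, hlb12]
  exact List.append_cancel_right hw12

lemma phi_surj (hk : 1 ≤ k) (hn : 1 ≤ n) (hj : 1 ≤ j) {lb' : List (ℕ × ℕ)}
    (hlen : lb'.length = j) (hgood : ∀ p ∈ lb', 1 ≤ p.1 ∧ 1 ≤ p.2)
    (hsf : (lb'.map Prod.fst).sum = n) (hss : (lb'.map Prod.snd).sum = k * n + 1) :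
    ∃ t, t < j ∧ ∃ w, (IsKaryPath k n w ∧ numPeaks w = j) ∧
      (incL (decomp w)).rotate t = lb' := by
  set v := wordOf lb' with hv
  have hct : v.count true = n := by rw [hv, count_true_wordOf, hsf]
  have hcf : v.count false = k * n + 1 := by rw [hv, count_false_wordOf, hss]
  have hval : val k v = -1 := by
    unfold val
    rw [hct, hcf]
    push_cast
    ring
  have hvlen : v.length = n + (k * n + 1) := by
    rw [hv, length_wordOf, hsf, hss]
  have hvlen2 : 2 ≤ v.length := by omega
  obtain ⟨r, hr, hgoodr⟩ := cycle_exists k v hval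
  have hhead : (v.drop r).head? = some true := goodRot_head k v r hr hvlen2 hgoodr
  have hlast : r = 0 ∨ (v.take r).getLast? = some false := by
    rcases Nat.eq_zero_or_pos r with h0 | hpos
    · exact Or.inl h0
    · exact Or.inr (goodRot_take_last k v r hr hpos hval hgoodr)
  obtain ⟨m, hm, hrm⟩ := boundary lb' hgood r hr.le hhead hlast
  have hmj : m < j := by
    rcases lt_or_eq_of_le hm with h | h
    · omega
    · exfalso
      rw [hlen] at h
      rw [h] at hrm
      rw [List.take_of_length_le (by omega), ← hv] at hrm
      omega
  have hrot : v.rotate r = wordOf (lb'.rotate m) := by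
    rw [hrm]
    exact rotate_wordOf lb' m hm
  have hgoodrot : ∀ p ∈ lb'.rotate m, 1 ≤ p.1 ∧ 1 ≤ p.2 := by
    intro p hp
    exact hgood p ((List.rotate_perm lb' m).subset hp)
  have hrotne : lb'.rotate m ≠ [] := by
    intro hcon
    have := List.length_rotate lb' m
    rw [hcon] at this
    simp only [List.length_nil] at this
    omega
  obtain ⟨q, hq⟩ : ∃ q, (lb'.rotate m).getLast? = some q := by
    cases hcon : (lb'.rotate m).getLast? with
    | none => exact absurd (List.getLast?_eq_none_iff.1 hcon) hrotne
    | some q => exact ⟨q, rfl⟩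
  have hq2 : 1 ≤ q.2 := (hgoodrot q (List.mem_of_getLast? hq)).2
  set lb := decL (lb'.rotate m) with hlbdef
  have hincdec : incL lb = lb'.rotate m := incL_decL _ (fun q' hq' => by
    rw [hq] at hq'
    obtain rfl : q' = q := by exact (Option.some_inj.1 hq').symm ▸ rfl
    exact hq2)
  have hlbne : lb ≠ [] := by
    intro hcon
    have := length_decL (lb'.rotate m)
    rw [hlbdef] at hcon
    rw [hcon] at this
    simp only [List.length_nil] at this
    rw [List.length_rotate, hlen] at this
    omega
  have hwlb : wordOf (lb'.rotate m) = wordOf lb ++ [false] := by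
    rw [← hincdec, wordOf_incL _ hlbne]
  set w := wordOf lb with hwdef
  have hwrot : v.rotate r = w ++ [false] := by rw [hrot, hwlb]
  have hcount_t : w.count true = n := by
    have : (v.rotate r).count true = v.count true := (List.rotate_perm v r).count_eq _
    rw [hwrot, List.count_append] at this
    simp at this
    omega
  have hcount_f : w.count false = k * n := by
    have : (v.rotate r).count false = v.count false := (List.rotate_perm v r).count_eq _
    rw [hwrot, List.count_append] at this
    simp at this
    omega
  have hpath : IsKaryPath k n w := by
    refine ⟨hcount_t, hcount_f, ?_⟩
    intro p hp
    have hple : p <+: v.rotate r := by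
      rw [hwrot]
      exact hp.trans ⟨[false], rfl⟩
    have hplen : p.length < v.length := by
      have h1 := hp.length_le
      have h2 : (v.rotate r).length = v.length := List.length_rotate v r
      have h3 : w.length + 1 = v.length := by
        have := congrArg List.length hwrot
        simp at this
        omega
      omega
    have := hgoodr p hple hplen
    unfold val at this
    linarith
  have hlast2 : 2 ≤ q.2 := by
    by_contra hcon
    have hq21 : q.2 = 1 := by omega
    have hlastlb : lb.getLast? = some (q.1, 0) := by
      rw [hlbdef]
      have := getLast?_decL (lb'.rotate m) q hq
      rwa [hq21] at this
    have := getLast?_wordOf_snd_zero lb q.1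
      (hgoodrot q (List.mem_of_getLast? hq)).1 hlastlb
    have hfalse := path_getLast hk hn hpath
    rw [← hwdef] at this
    rw [hfalse] at this
    simp at this
  have hgoodlb : ∀ p ∈ lb, 1 ≤ p.1 ∧ 1 ≤ p.2 := by
    intro p hp
    constructor
    · exact fst_pos_decL _ (fun p' hp' => (hgoodrot p' hp').1) p hp
    · refine snd_pos_decL _ (fun p' hp' => (hgoodrot p' hp').2) ?_ p hp
      intro q' hq'
      rw [hq] at hq'
      obtain rfl : q' = q := Option.some_inj.1 hq'.symm
      exact hlast2
  have hlblen : lb.length = j := by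
    rw [hlbdef, length_decL, List.length_rotate, hlen]
  have hpeaks : numPeaks w = j := by
    rw [hwdef, numPeaks_wordOf lb hgoodlb, hlblen]
  have hdecompw : decomp w = lb := by
    rw [hwdef]
    exact decomp_wordOf lb hgoodlb
  rcases Nat.eq_zero_or_pos m with hm0 | hmpos
  · refine ⟨0, by omega, w, ⟨hpath, hpeaks⟩, ?_⟩
    rw [hdecompw, hincdec, List.rotate_zero, hm0, List.rotate_zero]
  · refine ⟨j - m, by omega, w, ⟨hpath, hpeaks⟩, ?_⟩
    rw [hdecompw, hincdec, List.rotate_rotate]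
    have : m + (j - m) = j := by omega
    rw [this, ← hlen, List.rotate_length]

end Main

/-! ### counting compositions -/

def compF : ℕ → ℕ → Finset (List ℕ)
  | 0, m => if m = 0 then {[]} else ∅
  | (j+1), m => (Finset.Icc 1 m).biUnion fun a => (compF j (m - a)).image (a :: ·)

lemma mem_compF (j : ℕ) : ∀ (m : ℕ) (x : List ℕ),
    x ∈ compF j m ↔ (x.length = j ∧ (∀ a ∈ x, 1 ≤ a) ∧ x.sum = m) := by
  induction j with
  | zero =>
    intro m x
    rw [compF]
    split
    · subst ‹m = 0›
      simp only [Finset.mem_singleton]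
      constructor
      · rintro rfl; simp
      · rintro ⟨h, -, -⟩; exact List.length_eq_zero_iff.1 h
    · simp only [Finset.notMem_empty, false_iff]
      rintro ⟨h, -, hs⟩
      rw [List.length_eq_zero_iff.1 h] at hs
      simp at hs
      omega
  | succ j ih =>
    intro m x
    rw [compF]
    simp only [Finset.mem_biUnion, Finset.mem_image, Finset.mem_Icc]
    constructor
    · rintro ⟨a, ⟨ha1, ha2⟩, y, hy, rfl⟩
      obtain ⟨hl, hpos, hs⟩ := (ih _ _).1 hy
      refine ⟨by simp [hl], ?_, by simp only [List.sum_cons, hs]; omega⟩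
      intro b hb
      rcases List.mem_cons.1 hb with rfl | hb'
      · exact ha1
      · exact hpos b hb'
    · rintro ⟨hl, hpos, hs⟩
      cases x with
      | nil => simp at hl
      | cons a y =>
        have ha : 1 ≤ a := hpos a (by simp)
        have hsum : a + y.sum = m := by simpa using hs
        refine ⟨a, ⟨ha, by omega⟩, y, (ih _ _).2 ⟨by simpa using hl,
          fun b hb => hpos b (by simp [hb]), by omega⟩, rfl⟩

lemma card_compF_succ (j m : ℕ) :
    (compF (j+1) m).card = ∑ a ∈ Finset.Icc 1 m, (compF j (m - a)).card := by
  rw [compF, Finset.card_biUnion]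
  · refine Finset.sum_congr rfl fun a _ => ?_
    exact Finset.card_image_of_injective _ (fun y z h => by simpa using h)
  · intro a ha b hb hab
    simp only [Finset.disjoint_left]
    rintro x hx hx'
    obtain ⟨y, -, rfl⟩ := Finset.mem_image.1 hx
    obtain ⟨z, -, hz⟩ := Finset.mem_image.1 hx'
    have h12 : b = a ∧ z = y := by simpa using hz
    exact hab h12.1.symm

lemma sum_range_choose_aux (q : ℕ) : ∀ m, ∑ i ∈ Finset.range m, i.choose q = m.choose (q+1) := by
  intro m
  induction m with
  | zero => simp
  | succ m ih =>
    rw [Finset.sum_range_succ, ih, Nat.choose_succ_succ' (m) (q)]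
    omega

lemma card_compF_zero_sum (j : ℕ) : (compF (j+1) 0).card = 0 := by
  rw [card_compF_succ]
  simp

lemma card_compF (j : ℕ) : ∀ m, (compF (j+1) (m+1)).card = m.choose j := by
  induction j with
  | zero =>
    intro m
    rw [card_compF_succ]
    have hterm : ∀ a ∈ Finset.Icc 1 (m+1), (compF 0 (m + 1 - a)).card =
        if a = m + 1 then 1 else 0 := by
      intro a ha
      have ha' := Finset.mem_Icc.1 ha
      rw [compF]
      split
      · rw [if_pos (by omega)]
        simp
      · rw [if_neg (by omega)]
        simp
    rw [Finset.sum_congr rfl hterm, Finset.sum_ite_eq' (Finset.Icc 1 (m+1)) (m+1)]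
    rw [if_pos (Finset.mem_Icc.2 (by omega))]
    simp
  | succ j ih =>
    intro m
    rw [card_compF_succ]
    rw [Finset.sum_Icc_succ_top (by omega : 1 ≤ m + 1)]
    have h0 : (compF (j+1) (m + 1 - (m+1))).card = 0 := by
      rw [Nat.sub_self]
      exact card_compF_zero_sum j
    rw [h0, Nat.add_zero]
    have hterm : ∀ a ∈ Finset.Icc 1 m, (compF (j+1) (m + 1 - a)).card = (m - a).choose j := by
      intro a ha
      have ha' := Finset.mem_Icc.1 ha
      have : m + 1 - a = (m - a) + 1 := by omega
      rw [this, ih]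
    rw [Finset.sum_congr rfl hterm]
    rw [← Finset.Ico_add_one_right_eq_Icc, Finset.sum_Ico_eq_sum_range]
    have : ∀ i ∈ Finset.range (m + 1 - 1), (m - (1 + i)).choose j = (m - 1 - i).choose j := by
      intro i _
      congr 1
      omega
    rw [Finset.sum_congr rfl this]
    have hrefl := Finset.sum_range_reflect (fun i => (i).choose j) (m - 1 + 1)
    rcases Nat.eq_zero_or_pos m with rfl | hm
    · simp
    have hm1 : m - 1 + 1 = m := by omega
    rw [hm1] at hrefl
    have : ∑ i ∈ Finset.range (m + 1 - 1), (m - 1 - i).choose j =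
        ∑ i ∈ Finset.range m, i.choose j := by
      rw [show m + 1 - 1 = m from rfl]
      calc ∑ i ∈ Finset.range m, (m - 1 - i).choose j
          = ∑ i ∈ Finset.range m, (fun i => i.choose j) (m - 1 - i) := rfl
        _ = ∑ i ∈ Finset.range m, i.choose j := hrefl
    rw [this, sum_range_choose_aux]

lemma card_comp_subtype (j m : ℕ) :
    Nat.card {x : List ℕ // x.length = j ∧ (∀ a ∈ x, 1 ≤ a) ∧ x.sum = m} =
      (compF j m).card := by
  have e : {x : List ℕ // x.length = j ∧ (∀ a ∈ x, 1 ≤ a) ∧ x.sum = m} ≃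
      {x : List ℕ // x ∈ compF j m} :=
    Equiv.subtypeEquivRight (fun x => (mem_compF j m x).symm)
  rw [Nat.card_congr e, Nat.card_eq_fintype_card, Fintype.card_coe]

lemma zip_fst_snd {α β : Type*} (l : List (α × β)) :
    (l.map Prod.fst).zip (l.map Prod.snd) = l := by
  induction l with
  | nil => rfl
  | cons p l ih => simp [ih]

end S16

/-- The number of `k`-ary paths of order `(k+1)n` with exactly `j` peaks is
`(1/j)·C(n−1, j−1)·C(kn, j−1)`: `j` times this number equals
`C(n−1, j−1)·C(kn, j−1)`. -/
theorem stmt16 (k n j : ℕ) (hk : 0 < k) (hn : 0 < n) (hj : 0 < j) :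
    j * {w : List Bool | IsKaryPath k n w ∧ numPeaks w = j}.ncard =
      (n - 1).choose (j - 1) * (k * n).choose (j - 1) := by
  classical
  set S : Set (List Bool) := {w | IsKaryPath k n w ∧ numPeaks w = j} with hS
  have hmem : ∀ w : ↥S, IsKaryPath k n w.val ∧ numPeaks w.val = j := fun w => w.2
  have e1 : Fin j × ↥S ≃ {lb : List (ℕ × ℕ) // lb.length = j ∧
      (∀ p ∈ lb, 1 ≤ p.1 ∧ 1 ≤ p.2) ∧ (lb.map Prod.fst).sum = n ∧
      (lb.map Prod.snd).sum = k * n + 1} := by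
    apply Equiv.ofBijective (fun tw =>
      ⟨(S16.incL (S16.decomp tw.2.val)).rotate tw.1.val,
        S16.phi_mem hk hn tw.1.val (hmem tw.2).1 (hmem tw.2).2⟩)
    constructor
    · rintro ⟨t1, w1⟩ ⟨t2, w2⟩ h
      simp only [Subtype.mk.injEq] at h
      obtain ⟨ht, hw⟩ := S16.phi_inj hk hn hj t1.isLt t2.isLt (hmem w1).1 (hmem w1).2
        (hmem w2).1 (hmem w2).2 h
      exact Prod.ext (Fin.ext ht) (Subtype.ext hw)
    · rintro ⟨lb', hlen, hgood, hsf, hss⟩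
      obtain ⟨t, ht, w, hwP, heq⟩ := S16.phi_surj hk hn hj hlen hgood hsf hss
      exact ⟨⟨⟨t, ht⟩, ⟨w, hwP⟩⟩, Subtype.ext heq⟩
  have e2 : {lb : List (ℕ × ℕ) // lb.length = j ∧
      (∀ p ∈ lb, 1 ≤ p.1 ∧ 1 ≤ p.2) ∧ (lb.map Prod.fst).sum = n ∧
      (lb.map Prod.snd).sum = k * n + 1} ≃
      {x : List ℕ // x.length = j ∧ (∀ a ∈ x, 1 ≤ a) ∧ x.sum = n} ×
      {y : List ℕ // y.length = j ∧ (∀ a ∈ y, 1 ≤ a) ∧ y.sum = k * n + 1} := by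
    refine ⟨fun lb => (⟨lb.val.map Prod.fst, ?_⟩, ⟨lb.val.map Prod.snd, ?_⟩),
      fun xy => ⟨xy.1.val.zip xy.2.val, ?_⟩, ?_, ?_⟩
    · obtain ⟨hlen, hgood, hsf, hss⟩ := lb.2
      refine ⟨by simp [hlen], ?_, hsf⟩
      intro a ha
      obtain ⟨p, hp, rfl⟩ := List.mem_map.1 ha
      exact (hgood p hp).1
    · obtain ⟨hlen, hgood, hsf, hss⟩ := lb.2
      refine ⟨by simp [hlen], ?_, hss⟩
      intro a ha
      obtain ⟨p, hp, rfl⟩ := List.mem_map.1 ha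
      exact (hgood p hp).2
    · obtain ⟨hxl, hxp, hxs⟩ := xy.1.2
      obtain ⟨hyl, hyp, hys⟩ := xy.2.2
      refine ⟨by rw [List.length_zip, hxl, hyl]; omega, ?_, ?_, ?_⟩
      · intro p hp
        obtain ⟨a, b⟩ := p
        have := List.of_mem_zip hp
        exact ⟨hxp a this.1, hyp b this.2⟩
      · rw [List.map_fst_zip (by omega), hxs]
      · rw [List.map_snd_zip (by omega), hys]
    · intro lb
      exact Subtype.ext (S16.zip_fst_snd lb.val)
    · intro xy
      obtain ⟨hxl, hxp, hxs⟩ := xy.1.2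
      obtain ⟨hyl, hyp, hys⟩ := xy.2.2
      refine Prod.ext (Subtype.ext ?_) (Subtype.ext ?_)
      · exact List.map_fst_zip (by omega)
      · exact List.map_snd_zip (by omega)
  have h1 : Nat.card (↥S) = S.ncard := Nat.card_coe_set_eq S
  calc j * S.ncard
      = Nat.card (Fin j) * Nat.card ↥S := by
        rw [Nat.card_eq_fintype_card, Fintype.card_fin, h1]
    _ = Nat.card (Fin j × ↥S) := (Nat.card_prod _ _).symm
    _ = Nat.card {lb : List (ℕ × ℕ) // lb.length = j ∧
          (∀ p ∈ lb, 1 ≤ p.1 ∧ 1 ≤ p.2) ∧ (lb.map Prod.fst).sum = n ∧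
          (lb.map Prod.snd).sum = k * n + 1} := Nat.card_congr e1
    _ = Nat.card ({x : List ℕ // x.length = j ∧ (∀ a ∈ x, 1 ≤ a) ∧ x.sum = n} ×
          {y : List ℕ // y.length = j ∧ (∀ a ∈ y, 1 ≤ a) ∧ y.sum = k * n + 1}) :=
        Nat.card_congr e2
    _ = Nat.card {x : List ℕ // x.length = j ∧ (∀ a ∈ x, 1 ≤ a) ∧ x.sum = n} *
          Nat.card {y : List ℕ // y.length = j ∧ (∀ a ∈ y, 1 ≤ a) ∧ y.sum = k * n + 1} :=
        Nat.card_prod _ _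
    _ = (S16.compF j n).card * (S16.compF j (k * n + 1)).card := by
        rw [S16.card_comp_subtype, S16.card_comp_subtype]
    _ = (n - 1).choose (j - 1) * (k * n).choose (j - 1) := by
        obtain ⟨j', rfl⟩ : ∃ j', j = j' + 1 := ⟨j - 1, by omega⟩
        obtain ⟨n', rfl⟩ : ∃ n', n = n' + 1 := ⟨n - 1, by omega⟩
        rw [S16.card_compF, S16.card_compF]
        simp
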